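/- Let $\delta > 0$, let $q > 0$ be real with $q \ne 1$, and let $\sigma' \ge 0$. Define $S_q(v) = \sum_{j=1}^v \big(\sigma' + (v+j)^{\delta}\big)^{-2q}$. Then $\lim_{v\to\infty} \frac{\log S_q(v) - q\,\log S_1(v)}{(1-q)\,\log v} = 1.$ -/
import Mathlib

open Real Filter

/-- the example `ℓ_j = (v+j)^δ` with fractal exponent `D_q = 1`. -/
theorem fractal_exponent_one_example
    (δ : ℝ) (hδ : 0 < δ) (q : ℝ) (hq0 : 0 < q) (hq1 : q ≠ 1)
    (σ' : ℝ) (hσ : 0 ≤ σ')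
    (S : ℝ → ℕ → ℝ)
    (hS : ∀ p v, S p v = ∑ j ∈ Finset.Icc 1 v,
      (σ' + ((v:ℝ) + (j:ℝ)) ^ δ) ^ (-(2*p))) :
    Filter.Tendsto (fun v : ℕ =>
        (Real.log (S q v) - q * Real.log (S 1 v)) / ((1-q) * Real.log v))
      Filter.atTop (nhds 1) := by
  have hlog2 : 0 < Real.log 2 := Real.log_pos one_lt_two
  have key : ∀ p : ℝ, 0 < p → ∀ v : ℕ, 1 ≤ v →
      Real.log v - 2*p*Real.log (σ' + (v:ℝ)^δ) - 2*p*(δ*Real.log 2)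
        ≤ Real.log (S p v)
      ∧ Real.log (S p v) ≤ Real.log v - 2*p*Real.log (σ' + (v:ℝ)^δ) := by
    intro p hp v hv
    have hv' : (1:ℝ) ≤ (v:ℝ) := by exact_mod_cast hv
    have hv0 : (0:ℝ) < v := by linarith
    have hvd : (0:ℝ) < (v:ℝ)^δ := Real.rpow_pos_of_pos hv0 δ
    have hbpos : 0 < σ' + (v:ℝ)^δ := by linarith
    have h2v : (0:ℝ) < (2:ℝ)*v := by linarith
    have h2vd : (0:ℝ) < ((2:ℝ)*v)^δ := Real.rpow_pos_of_pos h2v δ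
    have hBpos : 0 < σ' + ((2:ℝ)*v)^δ := by linarith
    have hexp : -(2*p) ≤ 0 := by nlinarith
    have hup : S p v ≤ (v:ℝ) * (σ' + (v:ℝ)^δ) ^ (-(2*p)) := by
      rw [hS]
      calc ∑ j ∈ Finset.Icc 1 v, (σ' + ((v:ℝ)+(j:ℝ))^δ) ^ (-(2*p))
          ≤ ∑ _j ∈ Finset.Icc 1 v, (σ' + (v:ℝ)^δ) ^ (-(2*p)) := by
            apply Finset.sum_le_sum
            intro j hj
            have hjv : ((v:ℝ)) ≤ (v:ℝ)+(j:ℝ) := by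
              have : (0:ℝ) ≤ (j:ℝ) := Nat.cast_nonneg j
              linarith
            have h1 : (v:ℝ)^δ ≤ ((v:ℝ)+(j:ℝ))^δ :=
              Real.rpow_le_rpow (le_of_lt hv0) hjv hδ.le
            exact Real.rpow_le_rpow_of_nonpos hbpos (by linarith) hexp
          _ = (v:ℝ) * (σ' + (v:ℝ)^δ) ^ (-(2*p)) := by
            rw [Finset.sum_const, Nat.card_Icc]
            simp [nsmul_eq_mul]
    have hlo : (v:ℝ) * (σ' + ((2:ℝ)*v)^δ) ^ (-(2*p)) ≤ S p v := by
      rw [hS]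
      calc ((v:ℝ)) * (σ' + ((2:ℝ)*v)^δ) ^ (-(2*p))
          = ∑ _j ∈ Finset.Icc 1 v, (σ' + ((2:ℝ)*v)^δ) ^ (-(2*p)) := by
            rw [Finset.sum_const, Nat.card_Icc]
            simp [nsmul_eq_mul]
          _ ≤ ∑ j ∈ Finset.Icc 1 v, (σ' + ((v:ℝ)+(j:ℝ))^δ) ^ (-(2*p)) := by
            apply Finset.sum_le_sum
            intro j hj
            have hjv : (j:ℝ) ≤ (v:ℝ) := by
              exact_mod_cast (Finset.mem_Icc.mp hj).2
            have hj1 : (1:ℝ) ≤ (j:ℝ) := by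
              exact_mod_cast (Finset.mem_Icc.mp hj).1
            have hjpos : (0:ℝ) < (v:ℝ)+(j:ℝ) := by linarith
            have h1 : ((v:ℝ)+(j:ℝ))^δ ≤ ((2:ℝ)*v)^δ :=
              Real.rpow_le_rpow hjpos.le (by linarith) hδ.le
            have hjd : (0:ℝ) < ((v:ℝ)+(j:ℝ))^δ := Real.rpow_pos_of_pos hjpos δ
            exact Real.rpow_le_rpow_of_nonpos (by linarith) (by linarith) hexp
    have hSpos : 0 < S p v := by
      have : (0:ℝ) < (v:ℝ) * (σ' + ((2:ℝ)*v)^δ) ^ (-(2*p)) := by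
        exact mul_pos hv0 (Real.rpow_pos_of_pos hBpos _)
      linarith
    have hup' : Real.log (S p v) ≤ Real.log v + (-(2*p)) * Real.log (σ' + (v:ℝ)^δ) := by
      calc Real.log (S p v) ≤ Real.log ((v:ℝ) * (σ' + (v:ℝ)^δ) ^ (-(2*p))) :=
            Real.log_le_log hSpos hup
        _ = Real.log v + (-(2*p)) * Real.log (σ' + (v:ℝ)^δ) := by
            rw [Real.log_mul hv0.ne' (Real.rpow_pos_of_pos hbpos _).ne',
              Real.log_rpow hbpos]
    have hlo' : Real.log v + (-(2*p)) * Real.log (σ' + ((2:ℝ)*v)^δ) ≤ Real.log (S p v) := by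
      calc Real.log v + (-(2*p)) * Real.log (σ' + ((2:ℝ)*v)^δ)
          = Real.log ((v:ℝ) * (σ' + ((2:ℝ)*v)^δ) ^ (-(2*p))) := by
            rw [Real.log_mul hv0.ne' (Real.rpow_pos_of_pos hBpos _).ne',
              Real.log_rpow hBpos]
        _ ≤ Real.log (S p v) :=
            Real.log_le_log (mul_pos hv0 (Real.rpow_pos_of_pos hBpos _)) hlo
    have hBb : Real.log (σ' + ((2:ℝ)*v)^δ) ≤ Real.log (σ' + (v:ℝ)^δ) + δ * Real.log 2 := by
      have h2d : (1:ℝ) ≤ (2:ℝ)^δ := Real.one_le_rpow one_le_two hδ.le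
      have hm : ((2:ℝ)*v)^δ = (2:ℝ)^δ * (v:ℝ)^δ := Real.mul_rpow (by norm_num) hv0.le
      have h2dpos : (0:ℝ) < (2:ℝ)^δ := Real.rpow_pos_of_pos two_pos δ
      have hle : σ' + ((2:ℝ)*v)^δ ≤ (2:ℝ)^δ * (σ' + (v:ℝ)^δ) := by
        rw [hm]; nlinarith
      calc Real.log (σ' + ((2:ℝ)*v)^δ) ≤ Real.log ((2:ℝ)^δ * (σ' + (v:ℝ)^δ)) :=
            Real.log_le_log hBpos hle
        _ = Real.log (σ' + (v:ℝ)^δ) + δ * Real.log 2 := by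
            rw [Real.log_mul h2dpos.ne' hbpos.ne', Real.log_rpow two_pos]; ring
    constructor
    · nlinarith [hlo', hBb, hp]
    · linarith [hup']
  have h1q : (1:ℝ) - q ≠ 0 := sub_ne_zero.mpr (Ne.symm hq1)
  have h1qabs : 0 < |1 - q| := abs_pos.mpr h1q
  have hbound : ∀ᶠ v : ℕ in atTop,
      ‖(Real.log (S q v) - q * Real.log (S 1 v)) / ((1-q) * Real.log v) - 1‖
        ≤ (4*q*(δ*Real.log 2)) / (|1-q| * Real.log v) := by
    filter_upwards [eventually_ge_atTop 2] with v hv2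
    have hv1 : 1 ≤ v := le_trans one_le_two hv2
    have hv2' : (2:ℝ) ≤ (v:ℝ) := by exact_mod_cast hv2
    have hlv : 0 < Real.log v := Real.log_pos (by linarith)
    obtain ⟨hq_lo, hq_hi⟩ := key q hq0 v hv1
    obtain ⟨h1_lo, h1_hi⟩ := key 1 one_pos v hv1
    have hden : (1-q) * Real.log v ≠ 0 := mul_ne_zero h1q hlv.ne'
    have heq : (Real.log (S q v) - q * Real.log (S 1 v)) / ((1-q) * Real.log v) - 1
        = ((Real.log (S q v) - q * Real.log (S 1 v)) - (1-q) * Real.log v)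
            / ((1-q) * Real.log v) := by
      field_simp
    rw [heq, Real.norm_eq_abs, abs_div, abs_mul, abs_of_pos hlv]
    rw [div_le_div_iff₀ (by positivity) (by positivity)]
    have habs : |(Real.log (S q v) - q * Real.log (S 1 v)) - (1-q) * Real.log v|
        ≤ 4*q*(δ*Real.log 2) := by
      rw [abs_le]
      constructor
      · nlinarith
      · nlinarith
    nlinarith [habs, mul_pos h1qabs hlv]
  have htend : Tendsto (fun v : ℕ => (4*q*(δ*Real.log 2)) / (|1-q| * Real.log v))
      atTop (nhds 0) := by
    apply Tendsto.div_atTop tendsto_const_nhds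
    have hlog : Tendsto (fun v : ℕ => Real.log v) atTop atTop :=
      Real.tendsto_log_atTop.comp tendsto_natCast_atTop_atTop
    exact hlog.const_mul_atTop h1qabs
  have h0 : Tendsto (fun v : ℕ =>
      (Real.log (S q v) - q * Real.log (S 1 v)) / ((1-q) * Real.log v) - 1)
      atTop (nhds 0) := squeeze_zero_norm' hbound htend
  have := h0.add_const 1
  simpa using this
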